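/- Let E be a real normed space. Then E endowed with its weak topology is an Ascoli space if and only if E is finite-dimensional. -/

import Mathlib

open Topology

/-- A topological space `Y` is *Ascoli* if for every compact subset `K` of `C(Y, ℝ)`
(endowed with the compact-open topology), the evaluation map `(y, f) ↦ f y` is jointly
continuous on `Y × K`. -/
def IsAscoli (Y : Type*) [TopologicalSpace Y] : Prop :=
  ∀ K : Set C(Y, ℝ), IsCompact K →
    Continuous fun p : Y × K => (p.2 : C(Y, ℝ)) p.1

open Filter Set NormedSpace

section Aux

variable {E : Type*} [NormedAddCommGroup E] [NormedSpace ℝ E]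

noncomputable def weakCM (f : E →L[ℝ] ℝ) : C(WeakSpace ℝ E, ℝ) :=
  ⟨fun x => f x, WeakBilin.eval_continuous ((topDualPairing ℝ E).flip) f⟩

lemma weak_compact_bounded (C : Set (WeakSpace ℝ E)) (hC : IsCompact C) :
    ∃ M, ∀ x ∈ C, ‖(toWeakSpace ℝ E).symm x‖ ≤ M := by
  rcases C.eq_empty_or_nonempty with rfl | ⟨x₀, hx₀⟩
  · exact ⟨0, by simp⟩
  have h : ∀ φ : StrongDual ℝ E, ∃ M, ∀ x : C,
      ‖inclusionInDoubleDual ℝ E ((toWeakSpace ℝ E).symm x.val) φ‖ ≤ M := by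
    intro φ
    obtain ⟨M, hM⟩ := hC.exists_bound_of_continuousOn (weakCM φ).continuous.continuousOn
    exact ⟨M, fun x => hM x.val x.property⟩
  obtain ⟨M, hM⟩ := banach_steinhaus (g := fun x : C =>
    inclusionInDoubleDual ℝ E ((toWeakSpace ℝ E).symm x.val)) h
  refine ⟨M, fun x hx => ?_⟩
  have := hM ⟨x, hx⟩
  rwa [show ‖inclusionInDoubleDual ℝ E ((toWeakSpace ℝ E).symm x)‖
      = ‖(toWeakSpace ℝ E).symm x‖ from (inclusionInDoubleDualLi ℝ).norm_map _] at this

lemma tendsto_weakCM (g : ℕ → StrongDual ℝ E) (hg : ∀ n, ‖g n‖ ≤ ((n : ℝ) + 1)⁻¹) :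
    Tendsto (fun n => weakCM (g n)) atTop (𝓝 (weakCM 0)) := by
  rw [ContinuousMap.tendsto_compactOpen_iff_forall]
  intro K hK
  haveI := isCompact_iff_compactSpace.mp hK
  rw [ContinuousMap.tendsto_iff_tendstoUniformly, Metric.tendstoUniformly_iff]
  obtain ⟨M, hM⟩ := weak_compact_bounded K hK
  intro ε hε
  have hlim : Tendsto (fun n : ℕ => ((n : ℝ) + 1)⁻¹ * max M 0) atTop (𝓝 0) := by
    have h0 : Tendsto (fun n : ℕ => ((n : ℝ) + 1)⁻¹) atTop (𝓝 0) :=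
      tendsto_one_div_add_atTop_nhds_zero_nat.congr (by simp [one_div])
    simpa using h0.mul_const (max M 0)
  filter_upwards [hlim.eventually (gt_mem_nhds hε)] with n hn x
  have h1 : dist ((weakCM (0 : StrongDual ℝ E)).restrict K x) ((weakCM (g n)).restrict K x)
      = ‖g n ((toWeakSpace ℝ E).symm x.val)‖ := by
    simp [weakCM, Real.dist_eq, ContinuousMap.restrict]
    change |(0:ℝ) - g n ((toWeakSpace ℝ E).symm x.val)| = _
    rw [zero_sub, abs_neg]
  rw [h1]
  calc ‖g n ((toWeakSpace ℝ E).symm x.val)‖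
      ≤ ‖g n‖ * ‖(toWeakSpace ℝ E).symm x.val‖ := (g n).le_opNorm _
    _ ≤ ((n : ℝ) + 1)⁻¹ * max M 0 := by
        apply mul_le_mul (hg n) (le_trans (hM x.val x.property) (le_max_left _ _))
          (norm_nonneg _) (by positivity)
    _ < ε := hn

lemma dual_not_findim (h : ¬ FiniteDimensional ℝ E) : ¬ FiniteDimensional ℝ (StrongDual ℝ E) := by
  intro hd
  haveI : FiniteDimensional ℝ (StrongDual ℝ (StrongDual ℝ E)) :=
    FiniteDimensional.of_injective
      (ContinuousLinearMap.coeLM ℝ (M := StrongDual ℝ E) (N₃ := ℝ))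
      ContinuousLinearMap.coe_injective
  exact h (FiniteDimensional.of_injective (inclusionInDoubleDualLi ℝ (E := E)).toLinearMap
    (inclusionInDoubleDualLi ℝ (E := E)).injective)

lemma exists_indep_seq {V : Type*} [AddCommGroup V] [Module ℝ V]
    (h : ¬ FiniteDimensional ℝ V) : ∃ f : ℕ → V, LinearIndependent ℝ f := by
  have hr : (Cardinal.aleph0 : Cardinal) ≤ Module.rank ℝ V := by
    by_contra hlt
    push_neg at hlt
    exact h (Module.rank_lt_aleph0_iff.mp hlt |> fun h => h)
  obtain ⟨s, hs, hli⟩ := le_rank_iff_exists_linearIndependent.mp hr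
  haveI : Infinite s := Cardinal.infinite_iff.mpr (hs.ge)
  let e := Infinite.natEmbedding s
  exact ⟨fun n => (e n : V), hli.comp e e.injective⟩

lemma weak_nhds_zero {U : Set (WeakSpace ℝ E)} (hU : U ∈ 𝓝 (0 : WeakSpace ℝ E)) :
    ∃ (I : Set (StrongDual ℝ E)) (t : StrongDual ℝ E → Set ℝ), I.Finite ∧ (∀ φ, t φ ∈ 𝓝 (0 : ℝ)) ∧
      ∀ x : E, (∀ φ ∈ I, φ x ∈ t φ) → toWeakSpace ℝ E x ∈ U := by
  set B := (topDualPairing ℝ E).flip with hB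
  have h𝓝 : 𝓝 (0 : WeakSpace ℝ E)
      = Filter.comap (fun (x : WeakBilin B) (φ : StrongDual ℝ E) => B x φ) (𝓝 (fun φ => B 0 φ)) :=
    nhds_induced _ _
  rw [h𝓝] at hU
  obtain ⟨S, hS, hsub⟩ := Filter.mem_comap.mp hU
  have hS0 : S ∈ 𝓝 (0 : StrongDual ℝ E → ℝ) := by
    convert hS using 2
    simp only [map_zero, LinearMap.zero_apply]
    rfl
  rw [nhds_pi, Filter.mem_pi] at hS0
  obtain ⟨I, hIfin, t, ht, htsub⟩ := hS0
  refine ⟨I, fun φ => t φ, hIfin, fun φ => by simpa using ht φ, fun x hx => ?_⟩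
  apply hsub
  exact htsub fun φ _ => hx φ ‹_›

lemma aux_not_indep {K V : Type*} [DivisionRing K] [AddCommGroup V] [Module K V]
    (p : Submodule K V) [FiniteDimensional K ↥p] (v : ℕ → V) (hv : LinearIndependent K v)
    (hvp : ∀ n, v n ∈ p) : False := by
  have h : LinearIndependent K (fun n => (⟨v n, hvp n⟩ : p)) := by
    apply LinearIndependent.of_comp p.subtype
    exact hv
  exact Module.Finite.not_linearIndependent_of_infinite _ h

lemma forward
    (hA : ∀ K : Set C(WeakSpace ℝ E, ℝ), IsCompact K →
      Continuous fun p : (WeakSpace ℝ E) × K => (p.2 : C(WeakSpace ℝ E, ℝ)) p.1) :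
    FiniteDimensional ℝ E := by
  by_contra hfd
  obtain ⟨f, hf⟩ := exists_indep_seq (dual_not_findim hfd)
  have hfne : ∀ n, f n ≠ 0 := fun n => hf.ne_zero n
  set c : ℕ → ℝ := fun n => ‖f n‖⁻¹ * ((n : ℝ) + 1)⁻¹ with hc_def
  have hc : ∀ n, c n ≠ 0 := fun n => by
    have h1 : ‖f n‖ ≠ 0 := norm_ne_zero_iff.mpr (hfne n)
    positivity
  set g : ℕ → StrongDual ℝ E := fun n => c n • f n with hg_def
  have hgnorm : ∀ n, ‖g n‖ ≤ ((n : ℝ) + 1)⁻¹ := by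
    intro n
    have h1 : ‖f n‖ ≠ 0 := norm_ne_zero_iff.mpr (hfne n)
    rw [hg_def, norm_smul, hc_def]
    simp only [norm_mul, norm_inv, norm_norm]
    rw [mul_comm ‖f n‖⁻¹, mul_assoc, inv_mul_cancel₀ h1, mul_one]
    rw [Real.norm_eq_abs, abs_of_nonneg (by positivity : (0:ℝ) ≤ (n : ℝ) + 1)]
  have hgli : LinearIndependent ℝ g := by
    have := hf.units_smul (fun n => Units.mk0 (c n) (hc n))
    exact this
  set G : ℕ → C(WeakSpace ℝ E, ℝ) := fun n => weakCM (g n) with hG_def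
  have hG : Tendsto G atTop (𝓝 (weakCM 0)) := tendsto_weakCM g hgnorm
  set K : Set C(WeakSpace ℝ E, ℝ) := insert (weakCM 0) (Set.range G) with hK_def
  have hKc : IsCompact K := hG.isCompact_insert_range
  have hcont := (hA K hKc).continuousAt
    (x := ((0 : WeakSpace ℝ E), (⟨weakCM 0, mem_insert _ _⟩ : K)))
  have hpre : {q : ℝ | |q| < 1} ∈
      𝓝 ((fun p : (WeakSpace ℝ E) × K => (p.2 : C(WeakSpace ℝ E, ℝ)) p.1)
        ((0 : WeakSpace ℝ E), ⟨weakCM 0, mem_insert _ _⟩)) := by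
    have : (weakCM (0 : StrongDual ℝ E)) (0 : WeakSpace ℝ E) = 0 := by simp [weakCM]; rfl
    rw [show ((fun p : (WeakSpace ℝ E) × K => (p.2 : C(WeakSpace ℝ E, ℝ)) p.1)
        ((0 : WeakSpace ℝ E), ⟨weakCM 0, mem_insert _ _⟩)) = 0 from this]
    exact (isOpen_lt (continuous_abs) continuous_const).mem_nhds (by simp)
  have hmem := hcont hpre
  rw [Filter.mem_map, nhds_prod_eq, Filter.mem_prod_iff] at hmem
  obtain ⟨U, hU, V, hV, hUV⟩ := hmem
  -- tail of G in V
  have hseq : Tendsto (fun n => (⟨G n, mem_insert_of_mem _ ⟨n, rfl⟩⟩ : K)) atTop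
      (𝓝 (⟨weakCM 0, mem_insert _ _⟩ : K)) := by
    rw [tendsto_subtype_rng]
    exact hG
  obtain ⟨N, hN⟩ := (hseq.eventually_mem hV).exists_forall_of_atTop
  -- finite family of functionals
  obtain ⟨I, t, hIfin, ht, hIU⟩ := weak_nhds_zero hU
  -- key: g n vanishes on the common kernel
  have hker : ∀ n ≥ N, ∀ x : E, (∀ φ ∈ I, φ x = 0) → g n x = 0 := by
    intro n hn x hx
    by_contra hne
    set a : ℝ := 2 / |g n x| with ha_def
    have hgx : |g n x| ≠ 0 := abs_ne_zero.mpr hne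
    have hmem : toWeakSpace ℝ E (a • x) ∈ U := by
      apply hIU
      intro φ hφ
      have : φ (a • x) = 0 := by rw [map_smul, hx φ hφ, smul_zero]
      rw [this]
      exact mem_of_mem_nhds (ht φ)
    have h2 : (toWeakSpace ℝ E (a • x), (⟨G n, mem_insert_of_mem _ ⟨n, rfl⟩⟩ : K)) ∈ U ×ˢ V :=
      ⟨hmem, hN n hn⟩
    have h3 := hUV h2
    simp only [Set.mem_preimage, Set.mem_setOf_eq] at h3
    have h4 : (G n) (toWeakSpace ℝ E (a • x)) = a * g n x := by
      show g n (a • x) = a * g n x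
      rw [map_smul, smul_eq_mul]
    rw [h4] at h3
    rw [abs_mul, ha_def, abs_div] at h3
    simp only [abs_abs] at h3
    have : |(2:ℝ)| / |g n x| * |g n x| = 2 := by
      field_simp
      norm_num
    rw [this] at h3
    norm_num at h3
  -- hence (g n) in span of I for n ≥ N
  haveI : Finite I := hIfin.to_subtype
  set L : I → E →ₗ[ℝ] ℝ := fun φ => (φ : StrongDual ℝ E).toLinearMap with hL_def
  have hspan : ∀ n ≥ N, ((g n).toLinearMap : E →ₗ[ℝ] ℝ) ∈ Submodule.span ℝ (Set.range L) := by
    intro n hn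
    apply mem_span_of_iInf_ker_le_ker
    intro x hx
    simp only [Submodule.mem_iInf, LinearMap.mem_ker] at hx
    exact hker n hn x (fun φ hφ => hx ⟨φ, hφ⟩)
  -- contradiction with linear independence
  haveI : FiniteDimensional ℝ (Submodule.span ℝ (Set.range L)) :=
    FiniteDimensional.span_of_finite ℝ (Set.finite_range L)
  have hli2 : LinearIndependent ℝ (fun n : ℕ => ((g (n + N)).toLinearMap : E →ₗ[ℝ] ℝ)) := by
    have h5 : LinearIndependent ℝ (fun n : ℕ => ((g n).toLinearMap : E →ₗ[ℝ] ℝ)) :=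
      hgli.map' (ContinuousLinearMap.coeLM ℝ) (LinearMap.ker_eq_bot.mpr
        ContinuousLinearMap.coe_injective)
    exact h5.comp (fun n => n + N) (add_left_injective N)
  exact aux_not_indep (Submodule.span ℝ (Set.range L)) _ hli2
    (fun n => hspan (n + N) (by omega))

instance : SeparatingDual ℝ (WeakSpace ℝ E) := by
  constructor
  intro x hx
  have hx' : ((toWeakSpace ℝ E).symm x : E) ≠ 0 := hx
  obtain ⟨f, hf⟩ := SeparatingDual.exists_ne_zero (R := ℝ) (V := E) hx'
  exact ⟨⟨f.toLinearMap, WeakBilin.eval_continuous ((topDualPairing ℝ E).flip) f⟩, hf⟩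

instance : ContinuousSMul ℝ (WeakSpace ℝ E) :=
  WeakBilin.instContinuousSMul (topDualPairing ℝ E).flip

noncomputable def weakHomeo [FiniteDimensional ℝ E] : E ≃ₜ WeakSpace ℝ E := by
  haveI : T2Space (WeakSpace ℝ E) := SeparatingDual.t2Space (R := ℝ)
  haveI : FiniteDimensional ℝ (WeakSpace ℝ E) := ‹FiniteDimensional ℝ E›
  exact { toWeakSpace ℝ E with
    continuous_toFun := (toWeakSpaceCLM ℝ E).continuous
    continuous_invFun := LinearMap.continuous_of_finiteDimensional
      ((toWeakSpace ℝ E).symm : WeakSpace ℝ E →ₗ[ℝ] E) }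

end Aux

theorem stmt_9 {E : Type*} [NormedAddCommGroup E] [NormedSpace ℝ E] :
    IsAscoli (WeakSpace ℝ E) ↔ FiniteDimensional ℝ E := by
  constructor
  · exact forward
  · intro hfd K hK
    haveI : LocallyCompactSpace (WeakSpace ℝ E) :=
      (weakHomeo (E := E)).locallyCompactSpace_iff.mp inferInstance
    exact ContinuousEval.continuous_eval.comp
      ((continuous_subtype_val.comp continuous_snd).prodMk continuous_fst)
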